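/- For every integer d ≥ 1 and every vector of positive real numbers f(1), …, f(d) with f(1) + ⋯ + f(d) = 1, there exists a sequence v : ℕ → {1, …, d} such that: (1) for each i ∈ {1, …, d}, the letter i has frequency f(i) in v; (2) v is k-balanced with k = ⌈log₂ d⌉; and (3) the factor complexity of v satisfies 𝒞_v(n) ≤ (n+1)^{d−1} for all n ∈ ℕ. -/

import Mathlib

open Finset Filter Topology

/-- Number of occurrences of the letter `c` in the factor of `u` of length `n`
starting at position `i`, i.e. `#{t : i ≤ t < i+n, u t = c}`. -/
def cnt {A : Type*} [DecidableEq A] (u : ℕ → A) (c : A) (i n : ℕ) : ℕ :=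
  ((Finset.Ico i (i + n)).filter (fun t => u t = c)).card

/-- A sequence `u` is `k`-balanced if the numbers of occurrences of any letter in
any two factors of the same length differ by at most `k`. -/
def IsBalanced {A : Type*} [DecidableEq A] (k : ℕ) (u : ℕ → A) : Prop :=
  ∀ i j n : ℕ, ∀ c : A, ((cnt u c i n : ℤ) - (cnt u c j n : ℤ)).natAbs ≤ k

/-- The letter `c` has frequency `f` in the sequence `u`. -/
def HasFreq {A : Type*} [DecidableEq A] (u : ℕ → A) (c : A) (f : ℝ) : Prop :=
  Tendsto (fun n : ℕ => (cnt u c 0 n : ℝ) / n) atTop (𝓝 f)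

/-- The factor complexity of `u`: the number of distinct words of length `n`
occurring as factors of `u`. -/
noncomputable def complexity {A : Type*} (u : ℕ → A) (n : ℕ) : ℕ :=
  Set.ncard {w : Fin n → A | ∃ i : ℕ, ∀ t : Fin n, w t = u (i + t)}

section cntBasic
variable {A : Type*} [DecidableEq A] (u : ℕ → A) (c : A)

lemma cnt_zero (i : ℕ) : cnt u c i 0 = 0 := by
  simp [cnt]

lemma cnt_succ (i n : ℕ) :
    cnt u c i (n + 1) = cnt u c i n + (if u (i + n) = c then 1 else 0) := by
  unfold cnt
  rw [show i + (n + 1) = (i + n) + 1 by ring, Nat.Ico_succ_right_eq_insert_Ico (by omega),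
    Finset.filter_insert]
  split
  · rw [Finset.card_insert_of_notMem (by simp)]
  · simp

lemma cnt_le (i n : ℕ) : cnt u c i n ≤ n := by
  calc ((Finset.Ico i (i + n)).filter (fun t => u t = c)).card
      ≤ (Finset.Ico i (i + n)).card := Finset.card_filter_le _ _
    _ = n := by simp

lemma cnt_add (i m n : ℕ) : cnt u c i (m + n) = cnt u c i m + cnt u c (i + m) n := by
  induction n with
  | zero => simp [cnt_zero]
  | succ n ih => rw [show m + (n+1) = (m+n)+1 by ring, cnt_succ, ih, cnt_succ,
      show i + (m + n) = i + m + n by ring]; ring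

lemma cnt_true_add_cnt_false (u : ℕ → Bool) (i n : ℕ) :
    cnt u true i n + cnt u false i n = n := by
  induction n with
  | zero => simp [cnt_zero]
  | succ n ih =>
    rw [cnt_succ, cnt_succ]
    cases h : u (i + n) <;> simp [h] <;> omega

end cntBasic

noncomputable def mech (p : ℝ) (n : ℕ) : Bool := decide (⌊(n:ℝ)*p⌋ < ⌊((n:ℝ)+1)*p⌋)

lemma floor_step {p : ℝ} (hp0 : 0 ≤ p) (hp1 : p ≤ 1) (z : ℝ) :
    ⌊z⌋ ≤ ⌊z + p⌋ ∧ ⌊z + p⌋ ≤ ⌊z⌋ + 1 := by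
  constructor
  · exact Int.floor_mono (by linarith)
  · calc ⌊z + p⌋ ≤ ⌊z + 1⌋ := Int.floor_mono (by linarith)
      _ = ⌊z⌋ + 1 := by rw [Int.floor_add_one]

lemma mech_iff (p : ℝ) (m : ℕ) : mech p m = true ↔ ⌊(m:ℝ)*p⌋ < ⌊((m:ℝ)+1)*p⌋ := by
  simp [mech]

lemma cnt_mech {p : ℝ} (hp0 : 0 ≤ p) (hp1 : p ≤ 1) (i n : ℕ) :
    (cnt (mech p) true i n : ℤ) = ⌊((i:ℝ)+n)*p⌋ - ⌊(i:ℝ)*p⌋ := by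
  induction n with
  | zero => simp [cnt]
  | succ n ih =>
    rw [cnt_succ]
    push_cast
    rw [ih]
    have hs := floor_step hp0 hp1 (((i:ℝ)+n)*p)
    have harg : ((i:ℝ)+n)*p + p = ((i:ℝ)+(n+1))*p := by ring
    rw [harg] at hs
    have hiff : mech p (i + n) = true ↔ ⌊((i:ℝ)+n)*p⌋ < ⌊((i:ℝ)+(n+1))*p⌋ := by
      rw [mech_iff]
      constructor <;> intro h <;> [skip; skip] <;>
        · convert h using 2 <;> push_cast <;> ring
    by_cases h : mech p (i + n) = true
    · have h2 := hiff.1 h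
      simp only [h, if_true]
      push_cast
      omega
    · have h2 : ¬ ⌊((i:ℝ)+n)*p⌋ < ⌊((i:ℝ)+(n+1))*p⌋ := fun hc => h (hiff.2 hc)
      simp only [h, if_false]
      push_cast
      omega

lemma cnt_mech_window {p : ℝ} (hp0 : 0 ≤ p) (hp1 : p ≤ 1) (i n : ℕ) :
    ⌊(n:ℝ)*p⌋ ≤ (cnt (mech p) true i n : ℤ) ∧
      (cnt (mech p) true i n : ℤ) ≤ ⌊(n:ℝ)*p⌋ + 1 := by
  rw [cnt_mech hp0 hp1]
  constructor
  · have h1 : (⌊(i:ℝ)*p⌋ : ℝ) + ⌊(n:ℝ)*p⌋ ≤ ((i:ℝ)+n)*p := by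
      have := Int.floor_le ((i:ℝ)*p); have := Int.floor_le ((n:ℝ)*p); push_cast; nlinarith
    have := Int.le_floor.2 (by push_cast at h1 ⊢; linarith : ((⌊(i:ℝ)*p⌋ + ⌊(n:ℝ)*p⌋ : ℤ) : ℝ) ≤ ((i:ℝ)+n)*p)
    omega
  · have h1 : ((i:ℝ)+n)*p < (⌊(i:ℝ)*p⌋ : ℝ) + ⌊(n:ℝ)*p⌋ + 2 := by
      have := Int.lt_floor_add_one ((i:ℝ)*p); have := Int.lt_floor_add_one ((n:ℝ)*p); nlinarith
    have := Int.floor_lt.2 (by push_cast; linarith : ((i:ℝ)+n)*p < ((⌊(i:ℝ)*p⌋ + ⌊(n:ℝ)*p⌋ + 2 : ℤ) : ℝ))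
    omega

lemma mech_balanced {p : ℝ} (hp0 : 0 ≤ p) (hp1 : p ≤ 1) : IsBalanced 1 (mech p) := by
  intro i j n c
  have hi := cnt_mech_window hp0 hp1 i n
  have hj := cnt_mech_window hp0 hp1 j n
  have hit := cnt_true_add_cnt_false (mech p) i n
  have hjt := cnt_true_add_cnt_false (mech p) j n
  cases c <;> omega

lemma mech_freq {p : ℝ} (hp0 : 0 ≤ p) (hp1 : p ≤ 1) : HasFreq (mech p) true p := by
  have key : ∀ n : ℕ, ((cnt (mech p) true 0 n : ℤ) : ℝ) = (⌊(n:ℝ)*p⌋ : ℝ) := by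
    intro n
    rw [cnt_mech hp0 hp1]
    push_cast
    norm_num
  unfold HasFreq
  refine tendsto_of_tendsto_of_tendsto_of_le_of_le' (g := fun n : ℕ => p - 1/(n:ℝ))
    (h := fun _ : ℕ => p) ?_ tendsto_const_nhds ?_ ?_
  · simpa using ((tendsto_const_nhds (x := p)).sub tendsto_one_div_atTop_nhds_zero_nat)
  · filter_upwards [eventually_ge_atTop 1] with n hn
    have hn0 : (0:ℝ) < n := by exact_mod_cast hn
    have h2 : (n:ℝ)*p - 1 ≤ ((cnt (mech p) true 0 n : ℤ) : ℝ) := by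
      rw [key]; have := Int.lt_floor_add_one ((n:ℝ)*p); linarith
    have heq : p - 1/(n:ℝ) = ((n:ℝ)*p - 1)/n := by field_simp
    rw [heq, div_le_div_iff_of_pos_right hn0]
    push_cast at h2 ⊢
    linarith
  · filter_upwards [eventually_ge_atTop 1] with n hn
    have hn0 : (0:ℝ) < n := by exact_mod_cast hn
    have h2 : ((cnt (mech p) true 0 n : ℤ) : ℝ) ≤ (n:ℝ)*p := by
      rw [key]; exact Int.floor_le _
    rw [div_le_iff₀ hn0]
    push_cast at h2 ⊢
    linarith

lemma floor_split (y : ℝ) {x : ℝ} (hx0 : 0 ≤ x) (hx1 : x < 1) :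
    ⌊x + y⌋ = ⌊y⌋ + if 1 - Int.fract y ≤ x then 1 else 0 := by
  have hf0 := Int.fract_nonneg y
  have hf1 := Int.fract_lt_one y
  have hy : x + y = (x + Int.fract y) + (⌊y⌋ : ℝ) := by
    have := Int.floor_add_fract y
    linarith
  rw [hy, Int.floor_add_intCast]
  split_ifs with h
  · have h1 : ⌊x + Int.fract y⌋ = 1 := by
      rw [Int.floor_eq_iff]
      push_cast
      constructor <;> linarith
    omega
  · have h1 : ⌊x + Int.fract y⌋ = 0 := by
      rw [Int.floor_eq_iff]
      push_cast
      constructor <;> [linarith; linarith [lt_of_not_ge h]]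
    omega

lemma floor_decomp (p : ℝ) (m s : ℕ) :
    ⌊((m:ℝ)+s)*p⌋ = ⌊(m:ℝ)*p⌋ + ⌊(s:ℝ)*p⌋ +
      (if 1 - Int.fract ((s:ℝ)*p) ≤ Int.fract ((m:ℝ)*p) then 1 else 0) := by
  have h1 : ((m:ℝ)+s)*p = Int.fract ((m:ℝ)*p) + (s:ℝ)*p + (⌊(m:ℝ)*p⌋ : ℝ) := by
    have := Int.floor_add_fract ((m:ℝ)*p)
    ring_nf
    linarith [Int.floor_add_fract ((m:ℝ)*p)]
  rw [h1, Int.floor_add_intCast, floor_split ((s:ℝ)*p) (Int.fract_nonneg _) (Int.fract_lt_one _)]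
  omega

lemma mech_det (p : ℝ) (n i i' : ℕ)
    (h : ∀ s, s ≤ n → ((1 - Int.fract ((s:ℝ)*p) ≤ Int.fract ((i:ℝ)*p)) ↔
      (1 - Int.fract ((s:ℝ)*p) ≤ Int.fract ((i':ℝ)*p)))) :
    ∀ t, t < n → mech p (i + t) = mech p (i' + t) := by
  intro t ht
  have A := floor_decomp p i t
  have A1 := floor_decomp p i (t+1)
  have B := floor_decomp p i' t
  have B1 := floor_decomp p i' (t+1)
  have hI := h t (le_of_lt ht)
  have hI1 := h (t+1) (by omega)
  unfold mech
  rw [decide_eq_decide]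
  have c1 : ((i+t : ℕ):ℝ) = (i:ℝ)+(t:ℝ) := by push_cast; ring
  have c2 : ((i+t : ℕ):ℝ)+1 = (i:ℝ)+((t+1:ℕ):ℝ) := by push_cast; ring
  have c1' : ((i'+t : ℕ):ℝ) = (i':ℝ)+(t:ℝ) := by push_cast; ring
  have c2' : ((i'+t : ℕ):ℝ)+1 = (i':ℝ)+((t+1:ℕ):ℝ) := by push_cast; ring
  rw [c2, c1, c2', c1', A, A1, B, B1, if_congr hI rfl rfl, if_congr hI1 rfl rfl]
  constructor <;> intro hlt <;> omega

lemma mech_complexity (p : ℝ) (n : ℕ) : complexity (mech p) n ≤ n + 1 := by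
  classical
  set S := {w : Fin n → Bool | ∃ i : ℕ, ∀ t : Fin n, w t = mech p (i + t)} with hS
  let T : ℝ → Finset ℕ := fun x =>
    (Finset.range (n+1)).filter (fun s => 1 - Int.fract ((s:ℝ)*p) ≤ x)
  have hTeq : ∀ x x', (T x).card = (T x').card → T x = T x' := by
    have mono : ∀ x x', x ≤ x' → T x ⊆ T x' := by
      intro x x' hxx
      simp only [T]
      intro s hs
      rw [Finset.mem_filter] at hs ⊢
      exact ⟨hs.1, le_trans hs.2 hxx⟩
    intro x x' hc
    rcases le_total x x' with hle | hle
    · exact Finset.eq_of_subset_of_card_le (mono _ _ hle) (le_of_eq hc.symm)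
    · exact (Finset.eq_of_subset_of_card_le (mono _ _ hle) (le_of_eq hc)).symm
  have hTle : ∀ m : ℕ, (T (Int.fract ((m:ℝ)*p))).card ≤ n := by
    intro m
    have hsub : T (Int.fract ((m:ℝ)*p)) ⊆ (Finset.range (n+1)).erase 0 := by
      intro s hs
      rw [Finset.mem_filter] at hs
      rw [Finset.mem_erase]
      refine ⟨?_, hs.1⟩
      rintro rfl
      have := hs.2
      simp only [Nat.cast_zero, zero_mul, Int.fract_zero, sub_zero] at this
      exact absurd (lt_of_le_of_lt this (Int.fract_lt_one _)) (lt_irrefl 1)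
    calc (T (Int.fract ((m:ℝ)*p))).card ≤ ((Finset.range (n+1)).erase 0).card :=
          Finset.card_le_card hsub
      _ = n := by rw [Finset.card_erase_of_mem (by simp), Finset.card_range]; omega
  let Φ : (Fin n → Bool) → ℕ := fun w =>
    if h : w ∈ S then (T (Int.fract (((h.choose : ℕ):ℝ)*p))).card else 0
  have hinj : Set.InjOn Φ S := by
    intro w hw w' hw' heq
    simp only [Φ, dif_pos hw, dif_pos hw'] at heq
    have hTT := hTeq _ _ heq
    have hcond : ∀ s, s ≤ n →
        ((1 - Int.fract ((s:ℝ)*p) ≤ Int.fract (((hw.choose : ℕ):ℝ)*p)) ↔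
         (1 - Int.fract ((s:ℝ)*p) ≤ Int.fract (((hw'.choose : ℕ):ℝ)*p))) := by
      intro s hsn
      have h1 := Finset.ext_iff.1 hTT s
      simp only [T, Finset.mem_filter, Finset.mem_range] at h1
      constructor
      · intro hx; exact (h1.1 ⟨by omega, hx⟩).2
      · intro hx; exact (h1.2 ⟨by omega, hx⟩).2
    funext t
    rw [hw.choose_spec t, hw'.choose_spec t]
    exact mech_det p n _ _ hcond t.val t.isLt
  calc complexity (mech p) n = S.ncard := rfl
    _ = (Φ '' S).ncard := (Set.ncard_image_of_injOn hinj).symm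
    _ ≤ (↑(Finset.range (n+1)) : Set ℕ).ncard := by
        apply Set.ncard_le_ncard _ (Finset.finite_toSet _)
        rintro m ⟨w, hwS, rfl⟩
        simp only [Finset.coe_range, Set.mem_Iio]
        have : Φ w = (T (Int.fract (((hwS.choose : ℕ):ℝ)*p))).card := dif_pos hwS
        rw [this]
        exact lt_of_le_of_lt (hTle _) (by omega)
    _ = n+1 := by rw [Set.ncard_coe_finset, Finset.card_range]

section comp
variable {A B : Type*} [DecidableEq A] [DecidableEq B] [Finite A] [Finite B] {φ : A → B} (hφ : Function.Injective φ)
  (x : ℕ → A)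
include hφ

lemma cnt_comp (c : A) (q m : ℕ) : cnt (φ ∘ x) (φ c) q m = cnt x c q m := by
  unfold cnt
  congr 1
  apply Finset.filter_congr
  intro t _
  simp only [Function.comp_apply, eq_iff_iff]
  exact ⟨fun h => hφ h, fun h => by rw [h]⟩

lemma cnt_comp_notin {c : B} (hc : ∀ k, φ (x k) ≠ c) (q m : ℕ) : cnt (φ ∘ x) c q m = 0 := by
  unfold cnt
  rw [Finset.card_eq_zero, Finset.filter_eq_empty_iff]
  intro t _
  exact hc t

lemma isBalanced_comp {k : ℕ} (hx : IsBalanced k x) : IsBalanced k (φ ∘ x) := by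
  intro i j n c
  by_cases h : ∃ c₀, φ c₀ = c
  · obtain ⟨c₀, rfl⟩ := h
    rw [cnt_comp hφ, cnt_comp hφ]
    exact hx i j n c₀
  · rw [cnt_comp_notin hφ x (fun k => fun hk => h ⟨x k, hk⟩),
      cnt_comp_notin hφ x (fun k => fun hk => h ⟨x k, hk⟩)]
    simp

lemma hasFreq_comp {c : A} {f : ℝ} (hx : HasFreq x c f) : HasFreq (φ ∘ x) (φ c) f := by
  unfold HasFreq at *
  simpa only [cnt_comp hφ] using hx

lemma complexity_comp_le (n : ℕ) : complexity (φ ∘ x) n ≤ complexity x n := by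
  unfold complexity
  have himg : {w : Fin n → B | ∃ i : ℕ, ∀ t : Fin n, w t = (φ ∘ x) (i + t)} ⊆
      (fun w : Fin n → A => φ ∘ w) '' {w : Fin n → A | ∃ i : ℕ, ∀ t : Fin n, w t = x (i + t)} := by
    rintro w ⟨i, hi⟩
    exact ⟨fun t => x (i + t), ⟨i, fun _ => rfl⟩, by funext t; exact (hi t).symm⟩
  calc Set.ncard {w : Fin n → B | ∃ i : ℕ, ∀ t : Fin n, w t = (φ ∘ x) (i + t)}
      ≤ Set.ncard ((fun w : Fin n → A => φ ∘ w) ''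
        {w : Fin n → A | ∃ i : ℕ, ∀ t : Fin n, w t = x (i + t)}) := by
        exact Set.ncard_le_ncard himg (Set.toFinite _)
    _ ≤ Set.ncard {w : Fin n → A | ∃ i : ℕ, ∀ t : Fin n, w t = x (i + t)} := by
        exact Set.ncard_image_le (Set.toFinite _)
end comp

def comb {A : Type*} (u : ℕ → Bool) (x y : ℕ → A) : ℕ → A :=
  fun n => if u n then x (cnt u true 0 n) else y (cnt u false 0 n)

section comb
variable {A : Type*} [DecidableEq A] (u : ℕ → Bool) (x y : ℕ → A)

lemma cnt_not (i n : ℕ) :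
    cnt (fun k => !u k) true i n = cnt u false i n ∧
      cnt (fun k => !u k) false i n = cnt u true i n := by
  constructor <;>
  · unfold cnt
    congr 1
    apply Finset.filter_congr
    intro t _
    simp

lemma comb_not : comb (fun k => !u k) y x = comb u x y := by
  funext n
  unfold comb
  rw [(cnt_not u 0 n).1, (cnt_not u 0 n).2]
  cases h : u n <;> simp [h]

lemma cnt_comb_left {c : A} (hc : ∀ k, y k ≠ c) (i0 n : ℕ) :
    cnt (comb u x y) c i0 n = cnt x c (cnt u true 0 i0) (cnt u true i0 n) := by
  induction n with
  | zero => rw [cnt_zero, cnt_zero, cnt_zero]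
  | succ n ih =>
    rw [cnt_succ, cnt_succ u true i0 n, ih]
    by_cases h : u (i0 + n) = true
    · have hv : comb u x y (i0 + n) = x (cnt u true 0 i0 + cnt u true i0 n) := by
        unfold comb
        rw [if_pos h]
        congr 1
        have := cnt_add u true 0 i0 n
        simpa using this
      rw [hv, h, if_pos rfl, cnt_succ]
    · have hv : comb u x y (i0 + n) = y (cnt u false 0 (i0 + n)) := by
        unfold comb
        rw [if_neg h]
      rw [hv, if_neg (hc _), if_neg h]
      simp

lemma cnt_comb_right {c : A} (hc : ∀ k, x k ≠ c) (i0 n : ℕ) :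
    cnt (comb u x y) c i0 n = cnt y c (cnt u false 0 i0) (cnt u false i0 n) := by
  rw [← comb_not u x y, cnt_comb_left _ _ _ hc, (cnt_not u 0 i0).1, (cnt_not u i0 n).1]
end comb

lemma ncard_prod' {α β : Type*} [Finite α] [Finite β] (s : Set α) (t : Set β) :
    (s ×ˢ t).ncard = s.ncard * t.ncard := by
  classical
  letI := Fintype.ofFinite α
  letI := Fintype.ofFinite β
  rw [Set.ncard_eq_toFinset_card' s, Set.ncard_eq_toFinset_card' t,
    ← Finset.card_product, Set.ncard_eq_toFinset_card', Set.toFinset_prod]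

lemma bal_window {A : Type*} [DecidableEq A] (x : ℕ → A) {k : ℕ} (hx : IsBalanced k x)
    (c : A) (q1 q2 m1 m2 : ℕ) (h1 : m1 ≤ m2 + 1) (h2 : m2 ≤ m1 + 1) :
    ((cnt x c q1 m1 : ℤ) - (cnt x c q2 m2 : ℤ)).natAbs ≤ k + 1 := by
  rcases le_total m1 m2 with h | h
  · have hsplit : cnt x c q2 m2 = cnt x c q2 m1 + cnt x c (q2 + m1) (m2 - m1) := by
      rw [← cnt_add]
      congr 1
      omega
    have hle := cnt_le x c (q2 + m1) (m2 - m1)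
    have hbase := hx q1 q2 m1 c
    omega
  · have hsplit : cnt x c q1 m1 = cnt x c q1 m2 + cnt x c (q1 + m2) (m1 - m2) := by
      rw [← cnt_add]
      congr 1
      omega
    have hle := cnt_le x c (q1 + m2) (m1 - m2)
    have hbase := hx q1 q2 m2 c
    omega

lemma comb_balanced_left {A : Type*} [DecidableEq A] (u : ℕ → Bool) (x y : ℕ → A)
    {kx : ℕ} (hu : IsBalanced 1 u) (hx : IsBalanced kx x) {c : A} (hc : ∀ k, y k ≠ c)
    (i j n : ℕ) :
    ((cnt (comb u x y) c i n : ℤ) - (cnt (comb u x y) c j n : ℤ)).natAbs ≤ kx + 1 := by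
  rw [cnt_comb_left u x y hc, cnt_comb_left u x y hc]
  have hw := hu i j n true
  exact bal_window x hx c _ _ _ _ (by omega) (by omega)

lemma comb_hasFreq_left {A : Type*} [DecidableEq A] (u : ℕ → Bool) (x y : ℕ → A)
    {p g : ℝ} (hu : HasFreq u true p) (hp : 0 < p) {c : A} (hx : HasFreq x c g)
    (hc : ∀ k, y k ≠ c) : HasFreq (comb u x y) c (g * p) := by
  have hNtop : Tendsto (fun n => cnt u true 0 n) atTop atTop := by
    rw [tendsto_atTop]
    intro b
    have h1 : ∀ᶠ n : ℕ in atTop, p/2 < (cnt u true 0 n : ℝ)/n :=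
      hu.eventually (eventually_gt_nhds (by linarith))
    have h2 : ∀ᶠ n : ℕ in atTop, (b:ℝ) ≤ (p/2) * n := by
      have : Tendsto (fun n : ℕ => (p/2)*(n:ℝ)) atTop atTop :=
        Tendsto.const_mul_atTop (by linarith) tendsto_natCast_atTop_atTop
      exact this.eventually_ge_atTop _
    filter_upwards [h1, h2, eventually_ge_atTop 1] with n hn1 hn2 hn3
    have hn0 : (0:ℝ) < n := by exact_mod_cast hn3
    rw [lt_div_iff₀ hn0] at hn1
    have : (b:ℝ) ≤ (cnt u true 0 n : ℝ) := by linarith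
    exact_mod_cast this
  have h1 : Tendsto (fun n => (cnt x c 0 (cnt u true 0 n) : ℝ)/(cnt u true 0 n))
      atTop (𝓝 g) := hx.comp hNtop
  have hmul := h1.mul hu
  apply hmul.congr'
  filter_upwards [hNtop.eventually_ge_atTop 1] with n hn
  have hN0 : ((cnt u true 0 n : ℕ) : ℝ) ≠ 0 := by
    have : (1:ℝ) ≤ (cnt u true 0 n : ℝ) := by exact_mod_cast hn
    linarith
  have hrw : (cnt (comb u x y) c 0 n : ℝ) = (cnt x c 0 (cnt u true 0 n) : ℝ) := by
    rw [cnt_comb_left u x y hc, cnt_zero]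
  rw [hrw]
  field_simp

lemma cnt_eq_of_factor_eq (u : ℕ → Bool) (i i' n : ℕ)
    (h : ∀ s, s < n → u (i + s) = u (i' + s)) :
    ∀ t, t ≤ n → cnt u true i t = cnt u true i' t := by
  intro t
  induction t with
  | zero => simp [cnt_zero]
  | succ t ih =>
    intro ht
    rw [cnt_succ, cnt_succ, ih (by omega), h t (by omega)]

lemma comb_complexity {A : Type*} [DecidableEq A] [Finite A] (u : ℕ → Bool) (x y : ℕ → A)
    (n : ℕ) :
    complexity (comb u x y) n ≤ complexity u n * (complexity x n * complexity y n) := by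
  classical
  set v := comb u x y with hv
  set S := {w : Fin n → A | ∃ i : ℕ, ∀ t : Fin n, w t = v (i + t)} with hSdef
  set Su := {w : Fin n → Bool | ∃ i : ℕ, ∀ t : Fin n, w t = u (i + t)} with hSudef
  set Sx := {w : Fin n → A | ∃ i : ℕ, ∀ t : Fin n, w t = x (i + t)} with hSxdef
  set Sy := {w : Fin n → A | ∃ i : ℕ, ∀ t : Fin n, w t = y (i + t)} with hSydef
  let Φ : (Fin n → A) → (Fin n → Bool) × (Fin n → A) × (Fin n → A) := fun w =>
    if h : w ∈ S then
      (fun t => u (h.choose + t), fun t => x (cnt u true 0 h.choose + t),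
       fun t => y (cnt u false 0 h.choose + t))
    else (fun _ => false, w, w)
  have hmaps : ∀ w ∈ S, Φ w ∈ Su ×ˢ Sx ×ˢ Sy := by
    intro w hw
    simp only [Φ, dif_pos hw, Set.mem_prod, hSudef, hSxdef, hSydef, Set.mem_setOf_eq]
    exact ⟨⟨_, fun t => rfl⟩, ⟨_, fun t => rfl⟩, ⟨_, fun t => rfl⟩⟩
  have hinj : Set.InjOn Φ S := by
    intro w hw w' hw' heq
    simp only [Φ, dif_pos hw, dif_pos hw'] at heq
    have e1 : ∀ t : Fin n, u (hw.choose + t) = u (hw'.choose + t) :=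
      fun t => congrFun (congrArg Prod.fst heq) t
    have e2 : ∀ t : Fin n,
        x (cnt u true 0 hw.choose + t) = x (cnt u true 0 hw'.choose + t) :=
      fun t => congrFun (congrArg (fun z => z.2.1) heq) t
    have e3 : ∀ t : Fin n,
        y (cnt u false 0 hw.choose + t) = y (cnt u false 0 hw'.choose + t) :=
      fun t => congrFun (congrArg (fun z => z.2.2) heq) t
    set i := hw.choose
    set i' := hw'.choose
    have e1' : ∀ s, s < n → u (i + s) = u (i' + s) := fun s hs => e1 ⟨s, hs⟩
    funext t
    rw [hw.choose_spec t, hw'.choose_spec t]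
    have hcnt_t : cnt u true i t.val = cnt u true i' t.val :=
      cnt_eq_of_factor_eq u i i' n e1' t.val (le_of_lt t.isLt)
    have hsum1 := cnt_true_add_cnt_false u i t.val
    have hsum2 := cnt_true_add_cnt_false u i' t.val
    have hcnt_f : cnt u false i t.val = cnt u false i' t.val := by omega
    have hu_t : u (i + t.val) = u (i' + t.val) := e1' t.val t.isLt
    show comb u x y (i + t.val) = comb u x y (i' + t.val)
    unfold comb
    by_cases h : u (i + t.val) = true
    · rw [if_pos h, if_pos (hu_t ▸ h)]
      have d1 : cnt u true 0 (i + t.val) = cnt u true 0 i + cnt u true i t.val := by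
        have := cnt_add u true 0 i t.val
        simpa using this
      have d2 : cnt u true 0 (i' + t.val) = cnt u true 0 i' + cnt u true i' t.val := by
        have := cnt_add u true 0 i' t.val
        simpa using this
      rw [d1, d2, hcnt_t]
      have hm : cnt u true i' t.val < n := lt_of_le_of_lt (cnt_le u true i' t.val) t.isLt
      exact e2 ⟨cnt u true i' t.val, hm⟩
    · rw [if_neg h, if_neg (fun hc => h (hu_t ▸ hc))]
      have d1 : cnt u false 0 (i + t.val) = cnt u false 0 i + cnt u false i t.val := by
        have := cnt_add u false 0 i t.val
        simpa using this
      have d2 : cnt u false 0 (i' + t.val) = cnt u false 0 i' + cnt u false i' t.val := by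
        have := cnt_add u false 0 i' t.val
        simpa using this
      rw [d1, d2, hcnt_f]
      have hm : cnt u false i' t.val < n := lt_of_le_of_lt (cnt_le u false i' t.val) t.isLt
      exact e3 ⟨cnt u false i' t.val, hm⟩
  calc complexity v n = S.ncard := rfl
    _ = (Φ '' S).ncard := (Set.ncard_image_of_injOn hinj).symm
    _ ≤ (Su ×ˢ Sx ×ˢ Sy).ncard :=
        Set.ncard_le_ncard (Set.image_subset_iff.2 hmaps) (Set.toFinite _)
    _ = Su.ncard * (Sx.ncard * Sy.ncard) := by rw [ncard_prod', ncard_prod']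
    _ = complexity u n * (complexity x n * complexity y n) := rfl


lemma hasFreq_false {u : ℕ → Bool} {p : ℝ} (hu : HasFreq u true p) : HasFreq u false (1 - p) := by
  unfold HasFreq at hu ⊢
  have h1 : Tendsto (fun n : ℕ => 1 - (cnt u true 0 n : ℝ)/n) atTop (𝓝 (1 - p)) :=
    tendsto_const_nhds.sub hu
  apply h1.congr'
  filter_upwards [eventually_ge_atTop 1] with n hn
  have hn0 : ((n:ℕ) : ℝ) ≠ 0 := by positivity
  have hc := cnt_true_add_cnt_false u 0 n
  have : (cnt u false 0 n : ℝ) = (n : ℝ) - (cnt u true 0 n : ℝ) := by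
    have : ((cnt u true 0 n : ℝ)) + (cnt u false 0 n : ℝ) = (n : ℝ) := by exact_mod_cast hc
    linarith
  rw [this]
  field_simp

lemma hasFreq_not_true {u : ℕ → Bool} {q : ℝ} (hu : HasFreq u false q) :
    HasFreq (fun k => !u k) true q := by
  unfold HasFreq at hu ⊢
  have h : ∀ n : ℕ, cnt (fun k => !u k) true 0 n = cnt u false 0 n :=
    fun n => (cnt_not u 0 n).1
  simpa only [h] using hu

lemma isBalanced_not {u : ℕ → Bool} (hu : IsBalanced 1 u) :
    IsBalanced 1 (fun k => !u k) := by
  intro i j n c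
  cases c
  · rw [(cnt_not u i n).2, (cnt_not u j n).2]
    exact hu i j n true
  · rw [(cnt_not u i n).1, (cnt_not u j n).1]
    exact hu i j n false

lemma comb_hasFreq_right {A : Type*} [DecidableEq A] (u : ℕ → Bool) (x y : ℕ → A)
    {q g : ℝ} (hu : HasFreq u false q) (hq : 0 < q) {c : A} (hy : HasFreq y c g)
    (hc : ∀ k, x k ≠ c) : HasFreq (comb u x y) c (g * q) := by
  rw [← comb_not u x y]
  exact comb_hasFreq_left _ _ _ (hasFreq_not_true hu) hq hy hc

lemma comb_balanced_right {A : Type*} [DecidableEq A] (u : ℕ → Bool) (x y : ℕ → A)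
    {ky : ℕ} (hu : IsBalanced 1 u) (hy : IsBalanced ky y) {c : A} (hc : ∀ k, x k ≠ c)
    (i j n : ℕ) :
    ((cnt (comb u x y) c i n : ℤ) - (cnt (comb u x y) c j n : ℤ)).natAbs ≤ ky + 1 := by
  rw [← comb_not u x y]
  exact comb_balanced_left _ _ _ (isBalanced_not hu) hy hc i j n


lemma main_aux : ∀ d : ℕ, 1 ≤ d → ∀ f : Fin d → ℝ, (∀ i, 0 < f i) → (∑ i, f i = 1) →
    ∃ v : ℕ → Fin d, (∀ i, HasFreq v i (f i)) ∧ IsBalanced (Nat.clog 2 d) v ∧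
      ∀ n : ℕ, complexity v n ≤ (n + 1) ^ (d - 1) := by
  intro d
  induction d using Nat.strong_induction_on with
  | _ d ih =>
  intro hd f hpos hsum
  by_cases hd1 : d = 1
  · subst hd1
    refine ⟨fun _ => ⟨0, by omega⟩, ?_, ?_, ?_⟩
    · intro i
      have hcnt : ∀ (c : Fin 1) (n : ℕ), cnt (fun _ : ℕ => (⟨0, by omega⟩ : Fin 1)) c 0 n = n := by
        intro c n
        unfold cnt
        rw [Finset.filter_true_of_mem (fun t _ => Subsingleton.elim _ _)]
        simp
      have hf1 : f i = 1 := by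
        rw [show i = 0 from Subsingleton.elim i 0, ← Fin.sum_univ_one f, hsum]
      rw [HasFreq, hf1]
      apply Tendsto.congr' _ tendsto_const_nhds
      filter_upwards [eventually_ge_atTop 1] with n hn
      have hn0 : ((n:ℕ):ℝ) ≠ 0 := by positivity
      rw [hcnt, div_self hn0]
    · intro i j n c
      have hcnt : ∀ (q : ℕ), cnt (fun _ : ℕ => (⟨0, by omega⟩ : Fin 1)) c q n = n := by
        intro q
        unfold cnt
        rw [Finset.filter_true_of_mem (fun t _ => Subsingleton.elim _ _)]
        simp
      rw [hcnt, hcnt]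
      simp
    · intro n
      have hsub : {w : Fin n → Fin 1 | ∃ i : ℕ, ∀ t : Fin n,
          w t = (fun _ : ℕ => (⟨0, by omega⟩ : Fin 1)) (i + t)} ⊆
          {fun _ : Fin n => (⟨0, by omega⟩ : Fin 1)} := by
        intro w _
        exact Subsingleton.elim _ _
      calc complexity _ n ≤ Set.ncard {fun _ : Fin n => (⟨0, by omega⟩ : Fin 1)} :=
            Set.ncard_le_ncard hsub (Set.finite_singleton _)
        _ = 1 := Set.ncard_singleton _
        _ ≤ (n+1)^(1-1) := by norm_num
  · have hd2 : 2 ≤ d := by omega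
    set a := (d+1)/2 with ha
    set b := d - a with hb
    have hab : a + b = d := by omega
    have ha1 : 1 ≤ a := by omega
    have hb1 : 1 ≤ b := by omega
    have had : a < d := by omega
    have hbd : b < d := by omega
    have hba : b ≤ a := by omega
    have hclog_a : Nat.clog 2 a + 1 ≤ Nat.clog 2 d := by
      rw [Nat.clog_of_two_le (by norm_num) hd2]
      have h2 : (d + 2 - 1)/2 = a := by omega
      rw [h2]
    have hclog_b : Nat.clog 2 b + 1 ≤ Nat.clog 2 d :=
      le_trans (by have := Nat.clog_mono_right 2 hba; omega) hclog_a
    set φ : Fin a → Fin d := fun i => ⟨i.val, by have := i.isLt; omega⟩ with hφdef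
    set ψ : Fin b → Fin d := fun j => ⟨a + j.val, by have := j.isLt; omega⟩ with hψdef
    have hφinj : Function.Injective φ := by
      intro i i' h
      have := congrArg Fin.val h
      simp only [hφdef] at this
      exact Fin.ext this
    have hψinj : Function.Injective ψ := by
      intro j j' h
      have := congrArg Fin.val h
      simp only [hψdef] at this
      exact Fin.ext (by omega)
    have hdisj : ∀ (i : Fin a) (j : Fin b), φ i ≠ ψ j := by
      intro i j h
      have h2 := congrArg Fin.val h
      have := i.isLt
      simp only [hφdef, hψdef] at h2
      omega
    set p := ∑ i : Fin a, f (φ i) with hpdef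
    have hsplit : p + ∑ j : Fin b, f (ψ j) = 1 := by
      rw [hpdef, ← hsum]
      have e1 : ∑ i : Fin d, f i = ∑ k : Fin (a+b), f (finCongr hab k) :=
        (Fintype.sum_equiv (finCongr hab) _ _ (fun k => rfl)).symm
      rw [e1, Fin.sum_univ_add]
      rfl
    have hane : Nonempty (Fin a) := ⟨⟨0, by omega⟩⟩
    have hbne : Nonempty (Fin b) := ⟨⟨0, by omega⟩⟩
    have hp : 0 < p := Finset.sum_pos (fun i _ => hpos _) Finset.univ_nonempty
    have hq : 0 < ∑ j : Fin b, f (ψ j) := Finset.sum_pos (fun j _ => hpos _) Finset.univ_nonempty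
    have hp1 : p < 1 := by linarith
    have hq1 : (1:ℝ) - p > 0 := by linarith
    obtain ⟨x₀, hxf, hxb, hxc⟩ := ih a had ha1 (fun i => f (φ i) / p)
      (fun i => div_pos (hpos _) hp)
      (by rw [← Finset.sum_div, ← hpdef, div_self hp.ne'])
    obtain ⟨y₀, hyf, hyb, hyc⟩ := ih b hbd hb1 (fun j => f (ψ j) / (1-p))
      (fun j => div_pos (hpos _) hq1)
      (by rw [← Finset.sum_div, show ∑ j : Fin b, f (ψ j) = 1 - p by linarith,
            div_self (by linarith : (1:ℝ) - p ≠ 0)])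
    set u := mech p with hudef
    have hub : IsBalanced 1 u := mech_balanced hp.le hp1.le
    have huf : HasFreq u true p := mech_freq hp.le hp1.le
    set x : ℕ → Fin d := φ ∘ x₀ with hxdef
    set y : ℕ → Fin d := ψ ∘ y₀ with hydef
    set v := comb u x y with hvdef
    have hyne : ∀ (i : Fin a) (k : ℕ), y k ≠ φ i := fun i k => (hdisj i (y₀ k)).symm
    have hxne : ∀ (j : Fin b) (k : ℕ), x k ≠ ψ j := fun j k => hdisj (x₀ k) j
    have hcover : ∀ c : Fin d, (∃ i, c = φ i) ∨ (∃ j, c = ψ j) := by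
      intro c
      by_cases h : c.val < a
      · exact Or.inl ⟨⟨c.val, h⟩, by apply Fin.ext; simp [hφdef]⟩
      · refine Or.inr ⟨⟨c.val - a, by have := c.isLt; omega⟩, ?_⟩
        apply Fin.ext
        simp only [hψdef]
        omega
    refine ⟨v, ?_, ?_, ?_⟩
    · intro c
      rcases hcover c with ⟨i, rfl⟩ | ⟨j, rfl⟩
      · have h := comb_hasFreq_left u x y huf hp (hasFreq_comp hφinj x₀ (hxf i)) (hyne i)
        rwa [div_mul_cancel₀ _ hp.ne'] at h
      · have h := comb_hasFreq_right u x y (hasFreq_false huf) hq1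
          (hasFreq_comp hψinj y₀ (hyf j)) (hxne j)
        rwa [div_mul_cancel₀ _ (by linarith : (1:ℝ)-p ≠ 0)] at h
    · intro i j n c
      rcases hcover c with ⟨i0, rfl⟩ | ⟨j0, rfl⟩
      · exact le_trans
          (comb_balanced_left u x y hub (isBalanced_comp hφinj x₀ hxb) (hyne i0) i j n) hclog_a
      · exact le_trans
          (comb_balanced_right u x y hub (isBalanced_comp hψinj y₀ hyb) (hxne j0) i j n) hclog_b
    · intro n
      have h3 := le_trans (complexity_comp_le hφinj x₀ n) (hxc n)
      have h4 := le_trans (complexity_comp_le hψinj y₀ n) (hyc n)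
      calc complexity v n ≤ complexity u n * (complexity x n * complexity y n) :=
            comb_complexity u x y n
        _ ≤ (n+1) * ((n+1)^(a-1) * ((n+1)^(b-1))) :=
            Nat.mul_le_mul (mech_complexity p n) (Nat.mul_le_mul h3 h4)
        _ = (n+1)^(1 + ((a-1) + (b-1))) := by rw [pow_add, pow_add, pow_one]
        _ = (n+1)^(d-1) := by congr 1; omega

/-- For every `d ≥ 1` and every positive vector `f` summing to `1`, there is a
sequence over a `d`-letter alphabet with letter frequencies `f`, which is
`⌈log₂ d⌉`-balanced and whose factor complexity satisfies `𝒞(n) ≤ (n+1)^(d-1)`. -/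
theorem freq_balanced_complexity_exists (d : ℕ) (hd : 1 ≤ d) (f : Fin d → ℝ)
    (hpos : ∀ i, 0 < f i) (hsum : ∑ i, f i = 1) :
    ∃ v : ℕ → Fin d,
      (∀ i, HasFreq v i (f i)) ∧
      IsBalanced (Nat.clog 2 d) v ∧
      ∀ n : ℕ, complexity v n ≤ (n + 1) ^ (d - 1) :=
  main_aux d hd f hpos hsum
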